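/- arXiv:1905.07035 — 3 statements merged into one kernel-verified Lean document; each statement's English description precedes it below -/
import Mathlib

section
/- Let $A_1,\dots,A_n$ be $d\times d$ real matrices and let $f = \det(I_d + x_1A_1 + \cdots + x_nA_n) \in \mathbb{R}[x_1,\dots,x_n]$. For any nonnegative integers $k_1,\dots,k_n$ with $k := k_1+\cdots+k_n \le d$, the coefficient of the monomial $x_1^{k_1}\cdots x_n^{k_n}$ in $f$ equals $\sum_{\alpha}\sum_{\sigma} \det M(\alpha,\sigma)$, where the first sum is over all strictly increasing tuples $1 \le \alpha_1 < \alpha_2 < \cdots < \alpha_k \le d$, the second sum is over all functions $\sigma : \{1,\dots,k\} \to \{1,\dots,n\}$ such that $|\sigma^{-1}(i)| = k_i$ for each $i = 1,\dots,n$, and $M(\alpha,\sigma)$ is the $k\times k$ matrix whose $(p,q)$ entry is the $(\alpha_p,\alpha_q)$ entry of $A_{\sigma(p)}$. -/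
open scoped Classical

lemma det_eq_det_submatrix_of_injective {K d : ℕ} {R : Type*} [CommRing R]
    (α : Fin K → Fin d) (hα : Function.Injective α)
    (N : Matrix (Fin d) (Fin d) R)
    (hN : ∀ i, (∀ p, α p ≠ i) → ∀ j, N i j = if i = j then 1 else 0) :
    N.det = (N.submatrix α α).det := by
  classical
  set S : Set (Fin d) := Set.range α with hS
  let e : S ⊕ ↥Sᶜ ≃ Fin d := Equiv.Set.sumCompl S
  have h1 : N.det = (N.submatrix e e).det := (Matrix.det_submatrix_equiv_self e N).symm
  have h2 : N.submatrix e e =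
      Matrix.fromBlocks (N.submatrix (fun p : S => (p : Fin d)) (fun p : S => (p : Fin d)))
        (N.submatrix (fun p : S => (p : Fin d)) (fun q : ↥Sᶜ => (q : Fin d)))
        0 1 := by
    ext i j
    cases i with
    | inl p => cases j with
      | inl q => rfl
      | inr q => rfl
    | inr p => cases j with
      | inl q =>
        have hp : ∀ r, α r ≠ (p : Fin d) := by
          intro r hr
          exact p.2 ⟨r, hr⟩
        have := hN (p : Fin d) hp (q : Fin d)
        simp only [Matrix.submatrix_apply, Matrix.fromBlocks_apply₂₁]
        have hne : (p : Fin d) ≠ (q : Fin d) := by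
          intro h
          exact p.2 (h ▸ q.2)
        simp [e, Equiv.Set.sumCompl, this, hne]
        exact this.trans (if_neg hne)
      | inr q =>
        have hp : ∀ r, α r ≠ (p : Fin d) := by
          intro r hr
          exact p.2 ⟨r, hr⟩
        have := hN (p : Fin d) hp (q : Fin d)
        simp only [Matrix.submatrix_apply, Matrix.fromBlocks_apply₂₂]
        simp [e, Equiv.Set.sumCompl, this, Matrix.one_apply, Subtype.ext_iff]
        exact this
  have h3 := Matrix.det_fromBlocks_zero₂₁
    (N.submatrix (fun p : S => (p : Fin d)) (fun p : S => (p : Fin d)))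
    (N.submatrix (fun p : S => (p : Fin d)) (fun q : ↥Sᶜ => (q : Fin d)))
    (1 : Matrix ↥Sᶜ ↥Sᶜ R)
  let eα : Fin K ≃ S := Equiv.ofInjective α hα
  have h4 : (N.submatrix (fun p : S => (p : Fin d)) (fun p : S => (p : Fin d))).det
      = (N.submatrix α α).det := by
    rw [← Matrix.det_submatrix_equiv_self eα]
    congr 1
  rw [h1, h2, h3, Matrix.det_one, mul_one, h4]

lemma prod_monomial_one {ι σ : Type*} [Fintype ι] (ν : ι → (σ →₀ ℕ)) :
    ∏ i, MvPolynomial.monomial (ν i) (1 : ℝ) = MvPolynomial.monomial (∑ i, ν i) 1 := by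
  classical
  induction (Finset.univ : Finset ι) using Finset.induction_on with
  | empty => simp [MvPolynomial.monomial_zero']
  | insert _ _ h ih =>
    rw [Finset.prod_insert h, Finset.sum_insert h, ih, MvPolynomial.monomial_mul, one_mul]

lemma sum_colorings_eq {n d : ℕ} (k : Fin n → ℕ) (f : (Fin d → Option (Fin n)) → ℝ)
    (F : (Fin (∑ i, k i) → Fin d) → (Fin (∑ i, k i) → Fin n) → ℝ)
    (hval : ∀ (α : Fin (∑ i, k i) → Fin d) (σ : Fin (∑ i, k i) → Fin n),
      StrictMono α → (∀ l, (Finset.univ.filter fun p => σ p = l).card = k l) →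
      F α σ = f (fun i0 => if h : ∃ p, α p = i0 then some (σ (Classical.choose h)) else none)) :
    ∑ r ∈ Finset.univ.filter (fun r : Fin d → Option (Fin n) =>
        ∀ l, (Finset.univ.filter fun i => r i = some l).card = k l), f r =
    ∑ α ∈ Finset.univ.filter (fun α : Fin (∑ i, k i) → Fin d => StrictMono α),
      ∑ σ ∈ Finset.univ.filter (fun σ : Fin (∑ i, k i) → Fin n =>
          ∀ i, (Finset.univ.filter (fun p => σ p = i)).card = k i), F α σ := by
  classical
  have get_eq : ∀ (o : Option (Fin n)) (h : o.isSome) (l : Fin n), o = some l → o.get h = l := by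
    rintro o h l rfl; rfl
  set toR : (Fin (∑ i, k i) → Fin d) → (Fin (∑ i, k i) → Fin n) → (Fin d → Option (Fin n)) :=
    fun α σ i0 => if h : ∃ p, α p = i0 then some (σ (Classical.choose h)) else none with htoR
  have toR_apply : ∀ α σ, Function.Injective α → ∀ p, toR α σ (α p) = some (σ p) := by
    intro α σ hinj p
    have hex : ∃ q, α q = α p := ⟨p, rfl⟩
    have hc : Classical.choose hex = p := hinj (Classical.choose_spec hex)
    simp only [htoR, dif_pos hex, hc]
  have toR_none : ∀ α σ i0, (∀ p, α p ≠ i0) → toR α σ i0 = none := by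
    intro α σ i0 h
    have : ¬ ∃ p, α p = i0 := by push_neg; exact h
    simp only [htoR, dif_neg this]
  have htoR_count : ∀ (α : Fin (∑ i, k i) → Fin d) (σ : Fin (∑ i, k i) → Fin n),
      StrictMono α → ∀ l,
      (Finset.univ.filter fun i0 => toR α σ i0 = some l).card
        = (Finset.univ.filter fun p => σ p = l).card := by
    intro α σ hmono l
    symm
    apply Finset.card_bij (fun p _ => α p)
    · intro p hp
      simp only [Finset.mem_filter, Finset.mem_univ, true_and] at hp ⊢
      rw [toR_apply α σ hmono.injective p, hp]
    · intro p1 _ p2 _ h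
      exact hmono.injective h
    · intro i0 hi0
      simp only [Finset.mem_filter, Finset.mem_univ, true_and] at hi0
      by_cases hex : ∃ p, α p = i0
      · refine ⟨Classical.choose hex, ?_, Classical.choose_spec hex⟩
        simp only [Finset.mem_filter, Finset.mem_univ, true_and]
        rw [← Classical.choose_spec hex, toR_apply α σ hmono.injective] at hi0
        exact Option.some_inj.mp hi0
      · rw [toR_none α σ i0 (by push_neg at hex; exact hex)] at hi0
        cases hi0
  -- the support of r and its cardinality
  set Sr : (Fin d → Option (Fin n)) → Finset (Fin d) :=
    fun r => Finset.univ.filter fun i => r i ≠ none with hSr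
  have hcardS : ∀ r : Fin d → Option (Fin n),
      (Sr r).card = ∑ l, (Finset.univ.filter fun i => r i = some l).card := by
    intro r
    have h0 : (Sr r).card = ∑ b ∈ Finset.univ.image (some : Fin n → Option (Fin n)),
        ((Sr r).filter fun i => r i = b).card := by
      apply Finset.card_eq_sum_card_fiberwise
      intro i hi
      simp only [hSr, Finset.mem_filter] at hi
      cases hri : r i with
      | none => exact absurd hri (by simpa using hi)
      | some l => simp [hri]
    rw [h0, Finset.sum_image (fun a _ b _ h => Option.some_injective _ h)]
    refine Finset.sum_congr rfl fun l _ => ?_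
    congr 1
    ext i
    simp only [hSr, Finset.mem_filter, Finset.mem_univ, true_and]
    constructor
    · rintro ⟨-, h⟩; exact h
    · intro h; exact ⟨by simp [h], h⟩
  have hcard' : ∀ r : Fin d → Option (Fin n),
      (∀ l, (Finset.univ.filter fun i => r i = some l).card = k l) →
      (Sr r).card = ∑ i, k i := by
    intro r hr
    rw [hcardS r]
    exact Finset.sum_congr rfl fun l _ => hr l
  have hmem_isSome : ∀ (r : Fin d → Option (Fin n)) (h : (Sr r).card = ∑ i, k i)
      (p : Fin (∑ i, k i)), (r ((Sr r).orderEmbOfFin h p)).isSome := by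
    intro r h p
    have := Finset.orderEmbOfFin_mem (Sr r) h p
    simp only [hSr, Finset.mem_filter] at this
    exact Option.ne_none_iff_isSome.mp this.2
  set σof : ∀ (r : Fin d → Option (Fin n)), (Sr r).card = ∑ i, k i → Fin (∑ i, k i) → Fin n :=
    fun r h p => (r ((Sr r).orderEmbOfFin h p)).get (hmem_isSome r h p) with hσof
  have hσcount : ∀ (r : Fin d → Option (Fin n)) (h : (Sr r).card = ∑ i, k i) (l : Fin n),
      (Finset.univ.filter fun p => σof r h p = l).card
        = (Finset.univ.filter fun i => r i = some l).card := by
    intro r h l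
    apply Finset.card_bij (fun p _ => (Sr r).orderEmbOfFin h p)
    · intro p hp
      simp only [Finset.mem_filter, Finset.mem_univ, true_and] at hp ⊢
      rw [← hp]
      exact (Option.some_get _).symm
    · intro p1 _ p2 _ hpq
      exact ((Sr r).orderEmbOfFin h).injective hpq
    · intro i0 hi0
      simp only [Finset.mem_filter, Finset.mem_univ, true_and] at hi0
      have hiS : i0 ∈ Sr r := by
        simp only [hSr, Finset.mem_filter, Finset.mem_univ, true_and]
        rw [hi0]; simp
      have : i0 ∈ Set.range ⇑((Sr r).orderEmbOfFin h) := by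
        rw [Finset.range_orderEmbOfFin]; exact hiS
      obtain ⟨p, hp⟩ := this
      refine ⟨p, ?_, hp⟩
      simp only [Finset.mem_filter, Finset.mem_univ, true_and]
      exact get_eq _ _ _ (by rw [hp, hi0])
  rw [← Finset.sum_product']
  symm
  refine Finset.sum_bij' (fun x _ => toR x.1 x.2)
    (fun r hr => (⇑((Sr r).orderEmbOfFin (hcard' r (by
        simpa using (Finset.mem_filter.mp hr).2))),
      σof r (hcard' r (by simpa using (Finset.mem_filter.mp hr).2))))
    ?_ ?_ ?_ ?_ ?_
  · -- hi : toR x.1 x.2 lands in the r-filter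
    intro x hx
    rw [Finset.mem_product, Finset.mem_filter, Finset.mem_filter] at hx
    obtain ⟨⟨-, hmono⟩, -, hcount⟩ := hx
    simp only [Finset.mem_filter, Finset.mem_univ, true_and]
    intro l
    rw [htoR_count x.1 x.2 hmono l]
    exact hcount l
  · -- hj : (α_r, σ_r) lands in the product
    intro r hr
    have hPr := (Finset.mem_filter.mp hr).2
    simp only [Finset.mem_product, Finset.mem_filter]
    refine ⟨⟨Finset.mem_univ _, ((Sr r).orderEmbOfFin _).strictMono⟩, Finset.mem_univ _, ?_⟩
    intro l
    rw [hσcount r _ l]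
    exact hPr l
  · -- left_inv : r ↦ (α_r, σ_r) ↦ r
    intro x hx
    rw [Finset.mem_product, Finset.mem_filter, Finset.mem_filter] at hx
    obtain ⟨⟨-, hmono⟩, -, hcount⟩ := hx
    have hmemS : ∀ p, x.1 p ∈ Sr (toR x.1 x.2) := by
      intro p
      simp only [hSr, Finset.mem_filter, Finset.mem_univ, true_and]
      rw [toR_apply x.1 x.2 hmono.injective p]
      simp
    have hα : ⇑((Sr (toR x.1 x.2)).orderEmbOfFin (hcard' _ (by
        simpa using (Finset.mem_filter.mp (by
          simp only [Finset.mem_filter, Finset.mem_univ, true_and]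
          intro l
          rw [htoR_count x.1 x.2 hmono l]
          exact hcount l : toR x.1 x.2 ∈ Finset.univ.filter fun r =>
            ∀ l, (Finset.univ.filter fun i => r i = some l).card = k l)).2))) = x.1 :=
      (Finset.orderEmbOfFin_unique _ hmemS hmono).symm
    refine Prod.ext ?_ ?_
    · exact hα
    · funext p
      refine get_eq _ _ _ ?_
      rw [show ((Sr (toR x.1 x.2)).orderEmbOfFin _) p = x.1 p from congrFun hα p]
      exact toR_apply x.1 x.2 hmono.injective p
  · -- right_inv : (α,σ) ↦ r ↦ (α,σ)
    intro r hr
    have hPr := (Finset.mem_filter.mp hr).2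
    have hcard := hcard' r hPr
    show toR (⇑((Sr r).orderEmbOfFin hcard)) (σof r hcard) = r
    funext i0
    by_cases hex : ∃ p, ((Sr r).orderEmbOfFin hcard) p = i0
    · obtain ⟨p, hp⟩ := hex
      have hex' : ∃ p, ⇑((Sr r).orderEmbOfFin hcard) p = i0 := ⟨p, hp⟩
      rw [show toR (⇑((Sr r).orderEmbOfFin hcard)) (σof r hcard) i0
          = some (σof r hcard (Classical.choose hex')) from dif_pos hex']
      have hc := Classical.choose_spec hex'
      simp only [hσof]
      rw [Option.some_get]
      rw [hc]
    · have h1 : ∀ p, ⇑((Sr r).orderEmbOfFin hcard) p ≠ i0 := by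
        push_neg at hex; exact hex
      rw [toR_none _ _ i0 h1]
      by_contra hne
      have hiS : i0 ∈ Sr r := by
        simp only [hSr, Finset.mem_filter, Finset.mem_univ, true_and]
        exact fun h => hne h.symm
      have : i0 ∈ Set.range ⇑((Sr r).orderEmbOfFin hcard) := by
        rw [Finset.range_orderEmbOfFin]; exact hiS
      obtain ⟨p, hp⟩ := this
      exact h1 p hp
  · -- value equality
    intro x hx
    rw [Finset.mem_product, Finset.mem_filter, Finset.mem_filter] at hx
    obtain ⟨⟨-, hmono⟩, -, hcount⟩ := hx
    exact hval x.1 x.2 hmono hcount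


/-- Theorem 3.2 (generalized mixed discriminant formula for coefficients of a
determinantal polynomial): the coefficient of `x₁^{k₁} ⋯ xₙ^{kₙ}` in
`det(I_d + x₁A₁ + ⋯ + xₙAₙ)` equals the generalized mixed discriminant
`∑_α ∑_σ det M(α,σ)`. -/
theorem coeff_det_eq_generalizedMixedDiscriminant
    (n d : ℕ) (A : Fin n → Matrix (Fin d) (Fin d) ℝ)
    (k : Fin n → ℕ) (hk : ∑ i, k i ≤ d) :
    MvPolynomial.coeff (Finsupp.equivFunOnFinite.symm k)
      (Matrix.det ((1 : Matrix (Fin d) (Fin d) (MvPolynomial (Fin n) ℝ)) +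
        ∑ i, (MvPolynomial.X i : MvPolynomial (Fin n) ℝ) • (A i).map MvPolynomial.C)) =
    ∑ α ∈ Finset.univ.filter (fun α : Fin (∑ i, k i) → Fin d => StrictMono α),
      ∑ σ ∈ Finset.univ.filter (fun σ : Fin (∑ i, k i) → Fin n =>
          ∀ i, (Finset.univ.filter (fun p => σ p = i)).card = k i),
        Matrix.det (Matrix.of fun p q : Fin (∑ i, k i) => A (σ p) (α p) (α q)) := by
  classical
  set m : Fin n →₀ ℕ := Finsupp.equivFunOnFinite.symm k with hm
  set v : Fin d → Option (Fin n) → (Fin d → MvPolynomial (Fin n) ℝ) :=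
    fun i t => Option.elim t (fun j => if i = j then 1 else 0)
      (fun l j => MvPolynomial.X l * MvPolynomial.C (A l i j)) with hv
  set W : (Fin d → Option (Fin n)) → Matrix (Fin d) (Fin d) ℝ :=
    fun r => Matrix.of fun i j =>
      Option.elim (r i) (if i = j then (1:ℝ) else 0) (fun l => A l i j) with hW
  set ν : (Fin d → Option (Fin n)) → Fin d → (Fin n →₀ ℕ) :=
    fun r i => Option.elim (r i) 0 (fun l => Finsupp.single l 1) with hν
  set B := ((1 : Matrix (Fin d) (Fin d) (MvPolynomial (Fin n) ℝ)) +
        ∑ i, (MvPolynomial.X i : MvPolynomial (Fin n) ℝ) • (A i).map MvPolynomial.C) with hB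
  have hBrow : B = Matrix.of fun i => ∑ t : Option (Fin n), v i t := by
    ext i j
    simp only [hB, Matrix.add_apply, Matrix.one_apply, Matrix.sum_apply, Matrix.smul_apply,
      Matrix.map_apply, smul_eq_mul, Matrix.of_apply, Finset.sum_apply]
    rw [Fintype.sum_option]
    simp [hv]
  have eq1 : B.det = ∑ r : Fin d → Option (Fin n),
      Matrix.detRowAlternating (Matrix.of fun i => v i (r i)) := by
    rw [hBrow]
    exact Matrix.detRowAlternating.toMultilinearMap.map_sum v
  have eq2 : ∀ r : Fin d → Option (Fin n),
      Matrix.detRowAlternating (Matrix.of fun i => v i (r i)) =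
        MvPolynomial.monomial (∑ i, ν r i) ((W r).det) := by
    intro r
    have hrow : (Matrix.of fun i => v i (r i)) =
        fun i => (MvPolynomial.monomial (ν r i) (1:ℝ)) •
          (fun j => MvPolynomial.C (W r i j)) := by
      funext i
      cases hri : r i with
      | none =>
        funext j
        simp [hv, hν, hW, hri, apply_ite MvPolynomial.C]
      | some l =>
        funext j
        have hX : MvPolynomial.monomial (Finsupp.single l 1) (1:ℝ) = MvPolynomial.X l := rfl
        simp [hv, hν, hW, hri, hX, smul_eq_mul]
    rw [hrow]
    have hs := Matrix.detRowAlternating.toMultilinearMap.map_smul_univ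
      (fun i => MvPolynomial.monomial (ν r i) (1:ℝ))
      (fun i j => MvPolynomial.C (W r i j))
    rw [show (Matrix.detRowAlternating (fun i =>
        (MvPolynomial.monomial (ν r i) (1:ℝ)) • (fun j => MvPolynomial.C (W r i j)))) =
        (∏ i, MvPolynomial.monomial (ν r i) (1:ℝ)) •
          Matrix.detRowAlternating (fun i j => MvPolynomial.C (W r i j)) from hs]
    have hdetC : Matrix.detRowAlternating
        (fun i j => (MvPolynomial.C : ℝ →+* MvPolynomial (Fin n) ℝ) (W r i j)) =
        MvPolynomial.C ((W r).det) := by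
      have h : (fun i j => (MvPolynomial.C : ℝ →+* MvPolynomial (Fin n) ℝ) (W r i j))
          = (W r).map MvPolynomial.C := rfl
      rw [h]
      exact (RingHom.map_det (MvPolynomial.C) (W r)).symm
    rw [hdetC, prod_monomial_one, smul_eq_mul, MvPolynomial.C_apply,
      MvPolynomial.monomial_mul, add_zero, one_mul]
  have eq3 : MvPolynomial.coeff m B.det = ∑ r : Fin d → Option (Fin n),
      if (∑ i, ν r i) = m then (W r).det else 0 := by
    rw [eq1, MvPolynomial.coeff_sum]
    exact Finset.sum_congr rfl fun r _ => by rw [eq2 r, MvPolynomial.coeff_monomial]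
  have hcond : ∀ r : Fin d → Option (Fin n), ((∑ i, ν r i) = m ↔
      ∀ l, (Finset.univ.filter fun i => r i = some l).card = k l) := by
    intro r
    rw [DFunLike.ext_iff]
    apply forall_congr'
    intro l
    have h1 : (∑ i, ν r i) l = (Finset.univ.filter fun i => r i = some l).card := by
      rw [Finsupp.finset_sum_apply, Finset.card_filter]
      refine Finset.sum_congr rfl fun i _ => ?_
      cases hri : r i with
      | none => simp [hν, hri]
      | some l' => simp [hν, hri, Finsupp.single_apply]
    have h2 : m l = k l := by simp [hm]
    rw [h1, h2]
  have eq4 : MvPolynomial.coeff m B.det =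
      ∑ r ∈ Finset.univ.filter (fun r : Fin d → Option (Fin n) =>
          ∀ l, (Finset.univ.filter fun i => r i = some l).card = k l), (W r).det := by
    rw [eq3, Finset.sum_filter]
    exact Finset.sum_congr rfl fun r _ => by rw [if_congr (hcond r) rfl rfl]
  rw [eq4]
  apply sum_colorings_eq
  intro α σ hmono hcount
  set r : Fin d → Option (Fin n) :=
    fun i0 => if h : ∃ p, α p = i0 then some (σ (Classical.choose h)) else none with hr
  have hrα : ∀ p, r (α p) = some (σ p) := by
    intro p
    have hex : ∃ q, α q = α p := ⟨p, rfl⟩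
    have hc : Classical.choose hex = p := hmono.injective (Classical.choose_spec hex)
    simp only [hr, dif_pos hex, hc]
  have hrnone : ∀ i0, (∀ p, α p ≠ i0) → r i0 = none := by
    intro i0 h
    have : ¬ ∃ p, α p = i0 := by push_neg; exact h
    simp only [hr, dif_neg this]
  have hdet := det_eq_det_submatrix_of_injective α hmono.injective (W r) (by
    intro i0 hi0 j
    rw [hW]
    simp only [Matrix.of_apply]
    rw [hrnone i0 hi0]
    rfl)
  rw [hdet]
  congr 1
  ext p q
  simp only [Matrix.submatrix_apply, Matrix.of_apply, hW]
  rw [hrα p]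
  rfl
end

section
/- Let $A$ be a real symmetric negative semidefinite $n\times n$ matrix and $b \in \mathbb{R}^n$. Then the quadratic polynomial $f(x) = x^TAx + b^Tx + 1$ admits a monic symmetric determinantal representation of size at most $n+1$: there exist some $m \le n+1$ and real symmetric $m\times m$ matrices $A_1,\dots,A_n$ with $f = \det(I_m + x_1A_1 + \cdots + x_nA_n)$. -/
open MvPolynomial

/-- If `A` is symmetric negative semidefinite, then the quadratic
`f(x) = xᵀAx + bᵀx + 1` admits a monic symmetric determinantal representation
of size at most `n + 1`. -/
theorem quadratic_msdr_size_le (n : ℕ) (A : Matrix (Fin n) (Fin n) ℝ) (hA : A.IsSymm)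
    (hNSD : ∀ v : Fin n → ℝ, dotProduct v (A.mulVec v) ≤ 0)
    (b : Fin n → ℝ) :
    ∃ m : ℕ, m ≤ n + 1 ∧ ∃ B : Fin n → Matrix (Fin m) (Fin m) ℝ,
      (∀ i, (B i).IsSymm) ∧
      ((∑ i, ∑ j, C (A i j) * X i * X j) + (∑ i, C (b i) * X i) + 1
        : MvPolynomial (Fin n) ℝ) =
      Matrix.det ((1 : Matrix (Fin m) (Fin m) (MvPolynomial (Fin n) ℝ)) +
        ∑ i, (X i : MvPolynomial (Fin n) ℝ) • (B i).map C) := by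
  have hherm : (-A).IsHermitian := by
    rw [Matrix.IsHermitian, Matrix.conjTranspose_eq_transpose_of_trivial]
    rw [Matrix.transpose_neg, hA]
  have hPSD : (-A).PosSemidef := Matrix.PosSemidef.of_dotProduct_mulVec_nonneg hherm fun x => by
    simp only [star_trivial, Matrix.neg_mulVec, dotProduct_neg]
    exact neg_nonneg.2 (hNSD x)
  open scoped MatrixOrder in
  set S := CFC.sqrt (-A) with hSdef
  open scoped MatrixOrder in
  have hS2 : S * S = -A := CFC.sqrt_mul_sqrt_self (-A) hPSD.nonneg
  have hSsymm : S.IsSymm := by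
    open scoped MatrixOrder in
    have h := (Matrix.LE.le.posSemidef (CFC.sqrt_nonneg (-A))).1
    rwa [Matrix.IsHermitian, Matrix.conjTranspose_eq_transpose_of_trivial] at h
  have key : ∀ i j, (∑ k, S k i * S k j) = -A i j := by
    intro i j
    have h1 : (S * S) i j = -A i j := by rw [hS2]; rfl
    rw [Matrix.mul_apply] at h1
    rw [← h1]
    exact Finset.sum_congr rfl fun k _ => by rw [hSsymm.apply i k]
  set M : Fin n → Matrix (Fin n ⊕ Fin 1) (Fin n ⊕ Fin 1) ℝ := fun i =>
    Matrix.fromBlocks 0 (Matrix.of fun k _ => S k i) (Matrix.of fun _ l => S l i)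
      (Matrix.of fun _ _ => b i) with hM
  have hMsymm : ∀ i, (M i).IsSymm := by
    intro i
    rw [Matrix.IsSymm]
    refine Matrix.ext fun a c => ?_
    rcases a with a | a <;> rcases c with c | c <;>
      simp [hM, Matrix.fromBlocks_transpose]
  set e : Fin n ⊕ Fin 1 ≃ Fin (n + 1) := finSumFinEquiv with he
  refine ⟨n + 1, le_rfl, fun i => (M i).submatrix e.symm e.symm,
    fun i => (hMsymm i).submatrix e.symm, ?_⟩
  have step1 : ((1 : Matrix (Fin (n+1)) (Fin (n+1)) (MvPolynomial (Fin n) ℝ)) +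
      ∑ i, (X i : MvPolynomial (Fin n) ℝ) • ((M i).submatrix e.symm e.symm).map C) =
      ((1 : Matrix (Fin n ⊕ Fin 1) (Fin n ⊕ Fin 1) (MvPolynomial (Fin n) ℝ)) +
      ∑ i, (X i : MvPolynomial (Fin n) ℝ) • (M i).map C).submatrix e.symm e.symm := by
    refine Matrix.ext fun a c => ?_
    simp only [Matrix.add_apply, Matrix.submatrix_apply, Matrix.sum_apply,
      Matrix.smul_apply, Matrix.map_apply, Matrix.one_apply,
      EmbeddingLike.apply_eq_iff_eq]
  rw [step1, Matrix.det_submatrix_equiv_self]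
  set W : Matrix (Fin n) (Fin 1) (MvPolynomial (Fin n) ℝ) :=
    Matrix.of fun k _ => ∑ i, X i * C (S k i) with hW
  set R : Matrix (Fin 1) (Fin n) (MvPolynomial (Fin n) ℝ) :=
    Matrix.of fun _ l => ∑ i, X i * C (S l i) with hR
  set T : Matrix (Fin 1) (Fin 1) (MvPolynomial (Fin n) ℝ) :=
    Matrix.of fun _ _ => 1 + ∑ i, X i * C (b i) with hT
  have step2 : ((1 : Matrix (Fin n ⊕ Fin 1) (Fin n ⊕ Fin 1) (MvPolynomial (Fin n) ℝ)) +
      ∑ i, (X i : MvPolynomial (Fin n) ℝ) • (M i).map C) = Matrix.fromBlocks 1 W R T := by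
    refine Matrix.ext fun a c => ?_
    rcases a with a | a <;> rcases c with c | c <;>
      simp [hM, hW, hR, hT, Matrix.one_apply, Matrix.sum_apply, Finset.mul_sum,
        Matrix.smul_apply, smul_eq_mul, Fin.eq_zero, mul_comm]
  rw [step2, Matrix.det_fromBlocks_one₁₁]
  rw [show (T - R * W : Matrix (Fin 1) (Fin 1) (MvPolynomial (Fin n) ℝ)).det
    = (T - R * W) 0 0 from Matrix.det_fin_one _]
  have hRW : (R * W) 0 0 = -∑ i, ∑ j, C (A i j) * X i * X j := by
    rw [Matrix.mul_apply]
    calc ∑ k, R 0 k * W k 0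
        = ∑ k, ∑ i, ∑ j, X i * X j * C (S k i * S k j) := by
          refine Finset.sum_congr rfl fun k _ => ?_
          rw [hR, hW]
          simp only [Matrix.of_apply, Finset.sum_mul_sum]
          refine Finset.sum_congr rfl fun i _ => Finset.sum_congr rfl fun j _ => ?_
          rw [map_mul]; ring
      _ = ∑ i, ∑ j, ∑ k, X i * X j * C (S k i * S k j) := by
          rw [Finset.sum_comm]
          exact Finset.sum_congr rfl fun i _ => Finset.sum_comm
      _ = -∑ i, ∑ j, C (A i j) * X i * X j := by
          rw [← Finset.sum_neg_distrib]
          refine Finset.sum_congr rfl fun i _ => ?_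
          rw [← Finset.sum_neg_distrib]
          refine Finset.sum_congr rfl fun j _ => ?_
          rw [← Finset.mul_sum, ← map_sum, key, map_neg]; ring
  rw [Matrix.sub_apply, hRW, hT]
  simp only [Matrix.of_apply, sub_neg_eq_add]
  have hb : (∑ i, X i * C (b i) : MvPolynomial (Fin n) ℝ) = ∑ i, C (b i) * X i :=
    Finset.sum_congr rfl fun i _ => mul_comm _ _
  rw [hb]; ring
end

section
/- Let $d_1,\dots,d_n$ be real numbers and let $M$ be the $n\times n$ real matrix whose $(k,i)$ entry, for $0 \le k \le n-1$ and $1 \le i \le n$, is $e_k(d_1,\dots,\widehat{d_i},\dots,d_n)$, the elementary symmetric polynomial of degree $k$ evaluated at the $n-1$ values $d_j$, $j \neq i$. Then $M$ is invertible if and only if the $d_1,\dots,d_n$ are pairwise distinct. -/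
open Finset Polynomial

lemma esymm_eval_key (n : ℕ) (d : Fin n → ℝ) (i : Fin n) (x : ℝ) :
    ∑ k : Fin n, x ^ (n - 1 - (k : ℕ)) * ((-1) ^ (k : ℕ) *
      ∑ S ∈ Finset.powersetCard (k : ℕ) (Finset.univ.erase i), ∏ j ∈ S, d j) =
    ∏ l ∈ Finset.univ.erase i, (x - d l) := by
  have hn : 0 < n := i.pos
  set s : Multiset ℝ := (Finset.univ.erase i).val.map d with hs
  have hcard : Multiset.card s = n - 1 := by
    simp [hs, Finset.card_erase_of_mem]
  have h := congrArg (Polynomial.eval x) (Multiset.prod_X_sub_X_eq_sum_esymm s)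
  rw [Polynomial.eval_multiset_prod, Multiset.map_map] at h
  simp only [Function.comp, eval_sub, eval_X, eval_C, eval_finset_sum, eval_mul, eval_pow,
    eval_neg, eval_one] at h
  rw [hcard, Nat.sub_add_cancel hn] at h
  have hprod : (s.map fun t => x - t).prod = ∏ l ∈ Finset.univ.erase i, (x - d l) := by
    rw [hs, Multiset.map_map]
    rfl
  rw [hprod] at h
  rw [h, Fin.sum_univ_eq_sum_range
    (fun k => x ^ (n - 1 - k) * ((-1) ^ k * ∑ S ∈ Finset.powersetCard k (Finset.univ.erase i), ∏ j ∈ S, d j)) n]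
  refine Finset.sum_congr rfl fun k _ => ?_
  rw [← Finset.esymm_map_val d, ← hs]
  ring

/-- The matrix `M` with entries `M (k, i) = e_k(d₁,…,d̂ᵢ,…,dₙ)` (the elementary
symmetric polynomial of degree `k`, `0 ≤ k ≤ n-1`, of the values `d_j`, `j ≠ i`)
is invertible iff the `d₁,…,dₙ` are pairwise distinct. -/
theorem esymm_matrix_invertible_iff (n : ℕ) (d : Fin n → ℝ) :
    IsUnit (Matrix.of fun k i : Fin n =>
        ∑ S ∈ Finset.powersetCard (k : ℕ) (Finset.univ.erase i), ∏ j ∈ S, d j) ↔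
      Function.Injective d := by
  set M : Matrix (Fin n) (Fin n) ℝ := Matrix.of fun k i : Fin n =>
      ∑ S ∈ Finset.powersetCard (k : ℕ) (Finset.univ.erase i), ∏ j ∈ S, d j with hM
  rw [Matrix.isUnit_iff_isUnit_det, isUnit_iff_ne_zero]
  constructor
  · intro hdet
    by_contra hinj
    rw [Function.not_injective_iff] at hinj
    obtain ⟨a, b, hab, hne⟩ := hinj
    refine hdet (Matrix.det_zero_of_column_eq hne fun k => ?_)
    have key : (Finset.univ.erase a).val.map d = (Finset.univ.erase b).val.map d := by
      rw [Finset.erase_val, Finset.erase_val,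
        Multiset.map_erase_of_mem d _ (Finset.mem_univ_val a),
        Multiset.map_erase_of_mem d _ (Finset.mem_univ_val b), hab]
    simp only [hM, Matrix.of_apply]
    rw [← Finset.esymm_map_val d, ← Finset.esymm_map_val d, key]
  · intro hinj
    let E : Matrix (Fin n) (Fin n) ℝ := Matrix.diagonal fun k => (-1 : ℝ) ^ (k : ℕ)
    let V : Matrix (Fin n) (Fin n) ℝ := Matrix.of fun j k : Fin n => d j ^ (n - 1 - (k : ℕ))
    have hVA : V * (E * M) =
        Matrix.diagonal fun i => ∏ l ∈ Finset.univ.erase i, (d i - d l) := by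
      ext j i
      have : (V * (E * M)) j i = ∏ l ∈ Finset.univ.erase i, (d j - d l) := by
        rw [← esymm_eval_key n d i (d j)]
        simp only [Matrix.mul_apply, Matrix.diagonal_apply, ite_mul, zero_mul,
          Finset.sum_ite_eq, Finset.mem_univ, if_true, V, E, M, Matrix.of_apply]
      rw [this]
      rcases eq_or_ne j i with rfl | hji
      · rw [Matrix.diagonal_apply_eq]
      · rw [Matrix.diagonal_apply_ne _ hji]
        exact Finset.prod_eq_zero (Finset.mem_erase.mpr ⟨hji, Finset.mem_univ j⟩) (sub_self _)
    have hdetD : (Matrix.diagonal fun i => ∏ l ∈ Finset.univ.erase i, (d i - d l)).det ≠ 0 := by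
      rw [Matrix.det_diagonal]
      refine Finset.prod_ne_zero_iff.mpr fun i _ => Finset.prod_ne_zero_iff.mpr fun l hl => ?_
      have : l ≠ i := (Finset.mem_erase.mp hl).1
      exact sub_ne_zero_of_ne fun h => this (hinj h.symm)
    have := congrArg Matrix.det hVA
    rw [Matrix.det_mul, Matrix.det_mul] at this
    intro h0
    rw [h0, mul_zero, mul_zero] at this
    exact hdetD this.symm
end
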